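/- In a skew left truss (A,⋄,∘,σ), the map μ : A → Map(A,A) defined by μ_a(b) = (a∘b) ⋄ σ(a)⁻¹ gives an action of the semigroup (A,∘) on (A,⋄) by group endomorphisms: for all a,b,c ∈ A, μ_a(b⋄c) = μ_a(b) ⋄ μ_a(c) and μ_a(μ_b(c)) = μ_{a∘b}(c). -/

import Mathlib

/-- The map `μ_a(b) = (a∘b) ⋄ σ(a)⁻¹` is an action of `(A,∘)` on `(A,⋄)` by group
endomorphisms. -/
theorem skew_truss_mu_action {A : Type*} [Group A] (circ : A → A → A) (σ : A → A)
    (hassoc : ∀ a b c : A, circ (circ a b) c = circ a (circ b c))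
    (hlaw : ∀ a b c : A, circ a (b * c) = circ a b * (σ a)⁻¹ * circ a c) :
    (∀ a b c : A, circ a (b * c) * (σ a)⁻¹ = (circ a b * (σ a)⁻¹) * (circ a c * (σ a)⁻¹)) ∧
    (∀ a b c : A, circ a (circ b c * (σ b)⁻¹) * (σ a)⁻¹
        = circ (circ a b) c * (σ (circ a b))⁻¹) := by
  have hσ : ∀ a : A, σ a = circ a 1 := by
    intro a
    have h := hlaw a 1 1
    simp only [one_mul] at h
    have h3 : circ a 1 * (σ a)⁻¹ * circ a 1 = 1 * circ a 1 := by rw [← h, one_mul]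
    have h4 := mul_right_cancel h3
    exact (mul_inv_eq_one.mp h4).symm
  constructor
  · intro a b c
    rw [hlaw]; group
  · intro a b c
    -- σ(a∘b) = (a∘b)∘1 = a∘(b∘1) = a∘σ(b)
    have hσab : σ (circ a b) = circ a (σ b) := by
      rw [hσ (circ a b), hassoc, ← hσ b]
    -- a∘σ(b)⁻¹ = σ(a) * (a∘σ(b))⁻¹ * σ(a)
    have hinv : circ a (σ b)⁻¹ = σ a * (circ a (σ b))⁻¹ * σ a := by
      have h := hlaw a (σ b)⁻¹ (σ b)
      rw [inv_mul_cancel, ← hσ a] at h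
      calc circ a (σ b)⁻¹
          = circ a (σ b)⁻¹ * (σ a)⁻¹ * circ a (σ b) * (circ a (σ b))⁻¹ * σ a := by group
        _ = σ a * (circ a (σ b))⁻¹ * σ a := by rw [← h]
    rw [hlaw, hinv, hassoc, hσab]
    group
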